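/- arXiv:0903.4898 — 3 statements merged into one kernel-verified Lean document; each statement's English description precedes it below -/
import Mathlib

section
/- Let (N_r)_{r=1}^{M} be integrable nonnegative integer-valued random variables, N = ∑_r N_r with E[N] < ∞, and let (a_r^{(i)})_{i ≥ 1} be arrays of reals with 0 ≤ a_r^{(i)} ≤ q̄_i where q̄_i → 0 as i → ∞. Suppose ∑_r a_r^{(i)} E[N_r] = c_i with c_i / q̄_i bounded below by a positive constant. Then lim inf_{i → ∞} E[1 - e^{-∑_r a_r^{(i)} N_r}] / c_i ≥ 1. -/
open MeasureTheory Filter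

/-- Elementary bound: for `0 ≤ x ≤ t`, `(1 - t) x ≤ 1 - e^{-x}`. -/
lemma exp_lower_aux (x t : ℝ) (hx : 0 ≤ x) (hxt : x ≤ t) :
    (1 - t) * x ≤ 1 - Real.exp (-x) := by
  have h1 : x + 1 ≤ Real.exp x := Real.add_one_le_exp x
  have h2 : 1 - x ≤ Real.exp (-x) := by
    have := Real.add_one_le_exp (-x); linarith
  have h3 : Real.exp (-x) * Real.exp x = 1 := by
    rw [← Real.exp_add]; simp
  have h4 : (0 : ℝ) < Real.exp (-x) := Real.exp_pos _
  nlinarith [mul_le_mul_of_nonneg_left h1 h4.le, mul_le_mul_of_nonneg_left h2 hx,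
    mul_le_mul_of_nonneg_left hxt hx]

/-- Elementary bound: `1 - e^{-x} ≤ x`. -/
lemma exp_upper_aux (x : ℝ) : 1 - Real.exp (-x) ≤ x := by
  have := Real.add_one_le_exp (-x); linarith

/-- Lower-bound step in the proof of Lemma 1: if `0 ≤ a i r ≤ q̄ i → 0`,
`c i = ∑_r a i r E[N_r]` with `c i / q̄ i` bounded below by a positive constant, and
`N = ∑_r N_r` is integrable, then `liminf_i E[1 - exp(-∑_r a i r N_r)] / c i ≥ 1`. -/
theorem lower_bound_liminf
    {Ω : Type*} [MeasurableSpace Ω] (μ : Measure Ω) [IsProbabilityMeasure μ]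
    (M : ℕ) (N : Fin M → Ω → ℕ)
    (hNmeas : ∀ r, Measurable (N r))
    (hNint : ∀ r, Integrable (fun ω => (N r ω : ℝ)) μ)
    (a : ℕ → Fin M → ℝ) (qbar : ℕ → ℝ) (hqbar_pos : ∀ i, 0 < qbar i)
    (hqbar_zero : Tendsto qbar atTop (nhds 0))
    (ha : ∀ i r, 0 ≤ a i r ∧ a i r ≤ qbar i)
    (c : ℕ → ℝ)
    (hc : ∀ i, c i = ∑ r, a i r * ∫ ω, (N r ω : ℝ) ∂μ)
    (δ : ℝ) (hδ : 0 < δ) (hc_below : ∀ i, δ ≤ c i / qbar i) :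
    1 ≤ atTop.liminf (fun i =>
      (∫ ω, (1 - Real.exp (-(∑ r, a i r * (N r ω : ℝ)))) ∂μ) / c i) := by
  classical
  -- Notation
  set Nsum : Ω → ℝ := fun ω => ∑ r, (N r ω : ℝ) with hNsum_def
  have hNsum_meas : Measurable Nsum := by
    apply Finset.measurable_sum
    intro r _
    exact measurable_from_top.comp (hNmeas r)
  have hNsum_int : Integrable Nsum μ := integrable_finset_sum _ fun r _ => hNint r
  have hNsum_nonneg : ∀ ω, 0 ≤ Nsum ω := fun ω =>
    Finset.sum_nonneg fun r _ => Nat.cast_nonneg _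
  set S : ℕ → Ω → ℝ := fun i ω => ∑ r, a i r * (N r ω : ℝ) with hS_def
  have hS_meas : ∀ i, Measurable (S i) := by
    intro i
    apply Finset.measurable_sum
    intro r _
    exact (measurable_from_top.comp (hNmeas r)).const_mul _
  have hS_int : ∀ i, Integrable (S i) μ :=
    fun i => integrable_finset_sum _ fun r _ => (hNint r).const_mul _
  have hS_nonneg : ∀ i ω, 0 ≤ S i ω := fun i ω =>
    Finset.sum_nonneg fun r _ => mul_nonneg (ha i r).1 (Nat.cast_nonneg _)
  have hS_le : ∀ i ω, S i ω ≤ qbar i * Nsum ω := by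
    intro i ω
    rw [hNsum_def, Finset.mul_sum]
    exact Finset.sum_le_sum fun r _ =>
      mul_le_mul_of_nonneg_right (ha i r).2 (Nat.cast_nonneg _)
  have hES : ∀ i, ∫ ω, S i ω ∂μ = c i := by
    intro i
    rw [hc i]
    rw [integral_finset_sum _ fun r _ => (hNint r).const_mul _]
    exact Finset.sum_congr rfl fun r _ => integral_const_mul _ _
  -- the integrand
  set f : ℕ → Ω → ℝ := fun i ω => 1 - Real.exp (-(S i ω)) with hf_def
  have hf_nonneg : ∀ i ω, 0 ≤ f i ω := by
    intro i ω
    have : Real.exp (-(S i ω)) ≤ 1 := by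
      rw [Real.exp_le_one_iff]
      linarith [hS_nonneg i ω]
    simp only [hf_def]; linarith
  have hf_le : ∀ i ω, f i ω ≤ S i ω := fun i ω => exp_upper_aux (S i ω)
  have hf_meas : ∀ i, Measurable (f i) :=
    fun i => (Real.measurable_exp.comp (hS_meas i).neg).const_sub 1
  have hf_int : ∀ i, Integrable (f i) μ := by
    intro i
    refine (hS_int i).mono (hf_meas i).aestronglyMeasurable ?_
    filter_upwards with ω
    rw [Real.norm_eq_abs, Real.norm_eq_abs, abs_of_nonneg (hf_nonneg i ω),
      abs_of_nonneg (hS_nonneg i ω)]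
    exact hf_le i ω
  -- positivity of c
  have hδq : ∀ i, δ * qbar i ≤ c i := fun i => (le_div_iff₀ (hqbar_pos i)).1 (hc_below i)
  have hc_pos : ∀ i, 0 < c i := fun i =>
    lt_of_lt_of_le (mul_pos hδ (hqbar_pos i)) (hδq i)
  -- the bad set and the truncation error
  set A : ℕ → Set Ω := fun i => {ω | (Real.sqrt (qbar i))⁻¹ < Nsum ω} with hA_def
  have hA_meas : ∀ i, MeasurableSet (A i) :=
    fun i => measurableSet_lt measurable_const hNsum_meas
  set φ : ℕ → Ω → ℝ := fun i => (A i).indicator Nsum with hφ_def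
  have hφ_int : ∀ i, Integrable (φ i) μ := fun i => hNsum_int.indicator (hA_meas i)
  have hφ_nonneg : ∀ i ω, 0 ≤ φ i ω := by
    intro i ω
    exact Set.indicator_nonneg (fun ω _ => hNsum_nonneg ω) ω
  have hφ_le : ∀ i ω, φ i ω ≤ Nsum ω := by
    intro i ω
    by_cases h : ω ∈ A i
    · simp [hφ_def, h]
    · simp [hφ_def, h, hNsum_nonneg ω]
  set g : ℕ → ℝ := fun i => ∫ ω, φ i ω ∂μ with hg_def
  have hg_nonneg : ∀ i, 0 ≤ g i := fun i => integral_nonneg (hφ_nonneg i)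
  -- key pointwise inequality
  have hqsqrt : ∀ i, qbar i * (Real.sqrt (qbar i))⁻¹ = Real.sqrt (qbar i) := by
    intro i
    have hs : 0 < Real.sqrt (qbar i) := Real.sqrt_pos.2 (hqbar_pos i)
    rw [← Real.mul_self_sqrt (hqbar_pos i).le]
    field_simp
    rw [Real.sqrt_sq hs.le]
  have hkey : ∀ i ω,
      (1 - Real.sqrt (qbar i)) * S i ω - qbar i * φ i ω ≤ f i ω := by
    intro i ω
    by_cases h : ω ∈ A i
    · have hφω : φ i ω = Nsum ω := Set.indicator_of_mem h Nsum
      have h1 : S i ω ≤ qbar i * Nsum ω := hS_le i ω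
      have h2 : 0 ≤ f i ω := hf_nonneg i ω
      have h3 : 0 ≤ Real.sqrt (qbar i) * S i ω :=
        mul_nonneg (Real.sqrt_nonneg _) (hS_nonneg i ω)
      rw [hφω]; nlinarith
    · have hφω : φ i ω = 0 := Set.indicator_of_notMem h Nsum
      have hωA : Nsum ω ≤ (Real.sqrt (qbar i))⁻¹ := le_of_not_gt h
      have h1 : S i ω ≤ Real.sqrt (qbar i) := by
        calc S i ω ≤ qbar i * Nsum ω := hS_le i ω
          _ ≤ qbar i * (Real.sqrt (qbar i))⁻¹ :=
              mul_le_mul_of_nonneg_left hωA (hqbar_pos i).le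
          _ = Real.sqrt (qbar i) := hqsqrt i
      have := exp_lower_aux (S i ω) (Real.sqrt (qbar i)) (hS_nonneg i ω) h1
      rw [hφω]
      simpa using this
  -- integrated inequality
  have hint : ∀ i, (1 - Real.sqrt (qbar i)) * c i - qbar i * g i ≤ ∫ ω, f i ω ∂μ := by
    intro i
    have hlhs : Integrable (fun ω =>
        (1 - Real.sqrt (qbar i)) * S i ω - qbar i * φ i ω) μ :=
      ((hS_int i).const_mul _).sub ((hφ_int i).const_mul _)
    have := integral_mono hlhs (hf_int i) (hkey i)
    rwa [integral_sub ((hS_int i).const_mul _) ((hφ_int i).const_mul _),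
      integral_const_mul, integral_const_mul, hES i] at this
  -- per-index ratio lower bound
  set ratio : ℕ → ℝ := fun i => (∫ ω, f i ω ∂μ) / c i with hratio_def
  set h : ℕ → ℝ := fun i => (1 - Real.sqrt (qbar i)) - g i / δ with hh_def
  have hmono : ∀ i, h i ≤ ratio i := by
    intro i
    rw [hh_def, hratio_def]
    rw [le_div_iff₀ (hc_pos i)]
    have h1 := hint i
    have h2 : g i / δ * c i ≥ qbar i * g i := by
      rw [ge_iff_le, div_mul_eq_mul_div, le_div_iff₀ hδ]
      nlinarith [mul_le_mul_of_nonneg_left (hδq i) (hg_nonneg i)]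
    simp only []
    nlinarith
  -- ratio is bounded above by 1
  have hub : ∀ i, ratio i ≤ 1 := by
    intro i
    rw [hratio_def]
    rw [div_le_one (hc_pos i)]
    calc ∫ ω, f i ω ∂μ ≤ ∫ ω, S i ω ∂μ :=
          integral_mono (hf_int i) (hS_int i) (hf_le i)
      _ = c i := hES i
  -- g i → 0 by dominated convergence
  have hsqrt0 : Tendsto (fun i => Real.sqrt (qbar i)) atTop (nhds 0) := by
    have := (Real.continuous_sqrt.tendsto 0).comp hqbar_zero
    simpa [Function.comp_def] using this
  have ht_top : Tendsto (fun i => (Real.sqrt (qbar i))⁻¹) atTop atTop := by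
    apply Filter.Tendsto.inv_tendsto_nhdsGT_zero
    apply tendsto_nhdsWithin_of_tendsto_nhds_of_eventually_within _ hsqrt0
    filter_upwards with i
    exact Real.sqrt_pos.2 (hqbar_pos i)
  have hg0 : Tendsto g atTop (nhds 0) := by
    have h0 : (0 : ℝ) = ∫ ω, (0 : ℝ) ∂μ := by simp
    rw [hg_def, h0]
    apply tendsto_integral_of_dominated_convergence Nsum
      (fun i => (hNsum_meas.indicator (hA_meas i)).aestronglyMeasurable) hNsum_int
    · intro i
      filter_upwards with ω
      rw [Real.norm_eq_abs, abs_of_nonneg (hφ_nonneg i ω)]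
      exact hφ_le i ω
    · filter_upwards with ω
      have hev : ∀ᶠ i in atTop, φ i ω = 0 := by
        filter_upwards [ht_top.eventually_ge_atTop (Nsum ω)] with i hi
        have hω : ω ∉ A i := not_lt.2 hi
        exact Set.indicator_of_notMem hω Nsum
      exact Tendsto.congr' (hev.mono fun i hi => hi.symm) tendsto_const_nhds
  -- h → 1
  have hh1 : Tendsto h atTop (nhds 1) := by
    have : Tendsto (fun i => (1 - Real.sqrt (qbar i)) - g i / δ) atTop
        (nhds ((1 - 0) - 0 / δ)) :=
      (tendsto_const_nhds.sub hsqrt0).sub (hg0.div_const δ)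
    simpa using this
  -- conclude
  have hliminf : liminf h atTop ≤ liminf ratio atTop := by
    exact liminf_le_liminf (Eventually.of_forall hmono) hh1.isBoundedUnder_ge
      (isCoboundedUnder_ge_of_le atTop hub)
  rw [hh1.liminf_eq] at hliminf
  exact hliminf
end

section
/- Under the semi-Markov modulated request model (finite modulating state space, stationary ergodic, conditionally independent requests given the modulating process, regenerative points 𝒯₁ < 𝒯₂ with E[𝒯₂ - 𝒯₁] < ∞, marginal request probabilities q_i > 0 nonincreasing with q_i → 0), the probability that document i is requested at least once during a regenerative cycle satisfies P[i ∈ 𝓡(𝒯₁, 𝒯₂)] ∼ q_i · E[𝒯₂ - 𝒯₁] as i → ∞. -/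
open MeasureTheory Filter

lemma prod_ge_one_sub_sum {ι : Type*} (s : Finset ι) (b : ι → ℝ)
    (h0 : ∀ r ∈ s, 0 ≤ b r) (h1 : ∀ r ∈ s, b r ≤ 1) :
    1 - ∑ r ∈ s, (1 - b r) ≤ ∏ r ∈ s, b r := by
  induction s using Finset.cons_induction with
  | empty => simp
  | cons a s ha ih =>
    rw [Finset.sum_cons, Finset.prod_cons]
    have hb0 : (0:ℝ) ≤ b a := h0 a (Finset.mem_cons_self a s)
    have hb1 : b a ≤ 1 := h1 a (Finset.mem_cons_self a s)
    have ih' := ih (fun r hr => h0 r (Finset.mem_cons_of_mem hr))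
      (fun r hr => h1 r (Finset.mem_cons_of_mem hr))
    have hsum : (0:ℝ) ≤ ∑ r ∈ s, (1 - b r) :=
      Finset.sum_nonneg fun r hr => by
        have := h1 r (Finset.mem_cons_of_mem hr); linarith
    nlinarith [mul_le_mul_of_nonneg_left ih' hb0]

lemma one_sub_pow_le (x : ℝ) (hx1 : x ≤ 1) (n : ℕ) :
    1 - (1 - x) ^ n ≤ n * x := by
  have := one_add_mul_le_pow (a := -x) (by linarith) n
  have : 1 + n * (-x) ≤ (1 - x) ^ n := by simpa [sub_eq_add_neg] using this
  linarith

lemma one_sub_le_exp_neg' (x : ℝ) : 1 - x ≤ Real.exp (-x) := by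
  have := Real.add_one_le_exp (-x); linarith

lemma exp_neg_le (S : ℝ) (hS : 0 ≤ S) : Real.exp (-S) ≤ 1 - S + S ^ 2 := by
  have h1 : S + 1 ≤ Real.exp S := Real.add_one_le_exp S
  have h2 : Real.exp (-S) = (Real.exp S)⁻¹ := Real.exp_neg S
  have hpos : (0:ℝ) < Real.exp S := Real.exp_pos S
  rw [h2, inv_le_iff_one_le_mul₀ hpos]
  nlinarith [sq_nonneg S, sq_nonneg (1-S), mul_le_mul_of_nonneg_left h1 (show (0:ℝ) ≤ 1 - S + S^2 by nlinarith [sq_nonneg (S-1)]), sq_nonneg (S*(S-1))]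

/-- Lemma 1 of the paper: in the semi-Markov modulated request model, the probability
that document `i` is requested during a regenerative cycle, which by conditional
independence of requests given the modulating process equals
`E[1 - ∏_r (1 - q_i^{(r)})^(N_r)]` (with `N_r` the number of Poisson request points
while in state `r` during the cycle, `E[N_r] = π_r E[𝒯₂-𝒯₁]`), satisfies
`P[i ∈ 𝓡(𝒯₁,𝒯₂)] ∼ q_i E[𝒯₂-𝒯₁]` as `i → ∞`. -/
theorem lemma_cycle_request_probability_asymptotic
    {Ω : Type*} [MeasurableSpace Ω] (μ : Measure Ω) [IsProbabilityMeasure μ]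
    (M : ℕ) (hM : 0 < M)
    (N : Fin M → Ω → ℕ) (hN_meas : ∀ r, Measurable (N r))
    (hN_int : ∀ r, Integrable (fun ω => (N r ω : ℝ)) μ)
    (ET : ℝ) (hET : 0 < ET)
    (π : Fin M → ℝ) (hπ_pos : ∀ r, 0 < π r) (hπ_sum : ∑ r, π r = 1)
    (hEN : ∀ r, ∫ ω, (N r ω : ℝ) ∂μ = π r * ET)
    (qr : Fin M → ℕ → ℝ) (hqr : ∀ r i, 0 ≤ qr r i ∧ qr r i ≤ 1)
    (q : ℕ → ℝ) (hq_def : ∀ i, q i = ∑ r, π r * qr r i)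
    (hq_pos : ∀ i, 0 < q i) (hq_mono : Antitone q)
    (hq_zero : Tendsto q atTop (nhds 0)) :
    Tendsto (fun i : ℕ =>
        (∫ ω, (1 - ∏ r, (1 - qr r i) ^ (N r ω)) ∂μ) / (q i * ET))
      atTop (nhds 1) := by
  classical
  -- abbreviations
  set P : ℕ → Ω → ℝ := fun i ω => ∏ r, (1 - qr r i) ^ (N r ω) with hP
  set S : ℕ → Ω → ℝ := fun i ω => ∑ r, (N r ω : ℝ) * qr r i with hS
  set C : Ω → ℝ := fun ω => ∑ r, (N r ω : ℝ) / π r with hC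
  have hqr_le : ∀ r i, qr r i ≤ q i / π r := by
    intro r i
    rw [le_div_iff₀ (hπ_pos r), hq_def i, mul_comm]
    exact Finset.single_le_sum (f := fun r => π r * qr r i)
      (fun s _ => mul_nonneg (hπ_pos s).le (hqr s i).1) (Finset.mem_univ r)
  have hC_nonneg : ∀ ω, 0 ≤ C ω := fun ω =>
    Finset.sum_nonneg fun r _ => div_nonneg (Nat.cast_nonneg _) (hπ_pos r).le
  have hS_nonneg : ∀ i ω, 0 ≤ S i ω := fun i ω =>
    Finset.sum_nonneg fun r _ => mul_nonneg (Nat.cast_nonneg _) (hqr r i).1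
  have hS_le : ∀ i ω, S i ω ≤ q i * C ω := by
    intro i ω
    rw [hS, hC, Finset.mul_sum]
    refine Finset.sum_le_sum fun r _ => ?_
    calc ((N r ω : ℝ)) * qr r i ≤ (N r ω : ℝ) * (q i / π r) :=
          mul_le_mul_of_nonneg_left (hqr_le r i) (Nat.cast_nonneg _)
      _ = q i * ((N r ω : ℝ) / π r) := by ring
  -- P ∈ [0,1]
  have hP_nonneg : ∀ i ω, 0 ≤ P i ω := fun i ω =>
    Finset.prod_nonneg fun r _ => pow_nonneg (by linarith [(hqr r i).2]) _
  have hP_le_one : ∀ i ω, P i ω ≤ 1 :=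
    fun i ω => Finset.prod_le_one
      (fun r _ => pow_nonneg (by linarith [(hqr r i).2]) _)
      (fun r _ => pow_le_one₀ (by linarith [(hqr r i).2]) (by linarith [(hqr r i).1]))
  -- sandwich: S - S² ≤ 1 - P ≤ S
  have h_upper : ∀ i ω, 1 - P i ω ≤ S i ω := by
    intro i ω
    have h := prod_ge_one_sub_sum Finset.univ (fun r => (1 - qr r i) ^ (N r ω))
      (fun r _ => pow_nonneg (by linarith [(hqr r i).2]) _)
      (fun r _ => pow_le_one₀ (by linarith [(hqr r i).2]) (by linarith [(hqr r i).1]))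
    have h2 : ∑ r, (1 - (1 - qr r i) ^ (N r ω)) ≤ S i ω :=
      Finset.sum_le_sum fun r _ => one_sub_pow_le _ (hqr r i).2 _
    simp only [hP]; linarith
  have h_lower : ∀ i ω, S i ω - (S i ω) ^ 2 ≤ 1 - P i ω := by
    intro i ω
    have hPe : P i ω ≤ Real.exp (-(S i ω)) := by
      have : P i ω ≤ ∏ r, Real.exp (-((N r ω : ℝ) * qr r i)) := by
        refine Finset.prod_le_prod
          (fun r _ => pow_nonneg (by linarith [(hqr r i).2]) _) (fun r _ => ?_)
        have h1 : (1 - qr r i) ≤ Real.exp (-(qr r i)) := one_sub_le_exp_neg' _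
        calc (1 - qr r i) ^ (N r ω) ≤ (Real.exp (-(qr r i))) ^ (N r ω) :=
              pow_le_pow_left₀ (by linarith [(hqr r i).2]) h1 _
          _ = Real.exp (-((N r ω : ℝ) * qr r i)) := by
              rw [← Real.exp_nat_mul]; ring_nf
      calc P i ω ≤ ∏ r, Real.exp (-((N r ω : ℝ) * qr r i)) := this
        _ = Real.exp (∑ r, -((N r ω : ℝ) * qr r i)) := (Real.exp_sum _ _).symm
        _ = Real.exp (-(S i ω)) := by rw [hS]; simp
    have := exp_neg_le (S i ω) (hS_nonneg i ω)
    linarith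
  -- measurability / integrability
  have hP_meas : ∀ i, Measurable (P i) := by
    intro i
    exact Finset.measurable_prod _ fun r _ =>
      (measurable_from_top (f := fun n : ℕ => (1 - qr r i) ^ n)).comp (hN_meas r)
  have h1P_int : ∀ i, Integrable (fun ω => 1 - P i ω) μ := by
    intro i
    refine Integrable.mono' (integrable_const 1)
      ((measurable_const.sub (hP_meas i)).aestronglyMeasurable) ?_
    filter_upwards with ω
    rw [Real.norm_eq_abs, abs_le]
    constructor <;> [linarith [hP_le_one i ω]; linarith [hP_nonneg i ω]]
  have hS_int : ∀ i, Integrable (S i) μ := fun i =>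
    integrable_finset_sum _ fun r _ => (hN_int r).mul_const _
  have hC_int : Integrable C μ :=
    integrable_finset_sum _ fun r _ => (hN_int r).div_const _
  have hES : ∀ i, ∫ ω, S i ω ∂μ = q i * ET := by
    intro i
    rw [hS]
    rw [integral_finset_sum _ (fun r _ => (hN_int r).mul_const _)]
    have : ∀ r : Fin M, ∫ ω, (N r ω : ℝ) * qr r i ∂μ = π r * ET * qr r i := by
      intro r; rw [integral_mul_const, hEN r]
    simp only [this, hq_def]
    rw [Finset.sum_mul]
    exact Finset.sum_congr rfl fun r _ => by ring
  -- the error term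
  set f : ℕ → Ω → ℝ := fun i ω => (S i ω - (1 - P i ω)) / q i with hf
  have hf_nonneg : ∀ i ω, 0 ≤ f i ω := fun i ω =>
    div_nonneg (by linarith [h_upper i ω]) (hq_pos i).le
  have hf_le_C : ∀ i ω, f i ω ≤ C ω := by
    intro i ω
    rw [hf, div_le_iff₀ (hq_pos i)]
    have h1 : S i ω - (1 - P i ω) ≤ S i ω := by linarith [hP_le_one i ω, hP_nonneg i ω]
    calc S i ω - (1 - P i ω) ≤ S i ω := h1
      _ ≤ q i * C ω := hS_le i ω
      _ = C ω * q i := mul_comm _ _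
  have hf_le_sq : ∀ i ω, f i ω ≤ q i * (C ω) ^ 2 := by
    intro i ω
    rw [hf, div_le_iff₀ (hq_pos i)]
    have h1 : S i ω - (1 - P i ω) ≤ (S i ω) ^ 2 := by linarith [h_lower i ω]
    have h2 : (S i ω) ^ 2 ≤ (q i * C ω) ^ 2 :=
      pow_le_pow_left₀ (hS_nonneg i ω) (hS_le i ω) 2
    calc S i ω - (1 - P i ω) ≤ (q i * C ω) ^ 2 := le_trans h1 h2
      _ = q i * (C ω) ^ 2 * q i := by ring
  have hf_tendsto : Tendsto (fun i => ∫ ω, f i ω ∂μ) atTop (nhds 0) := by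
    have h0 : (0:ℝ) = ∫ ω, (0:ℝ) ∂μ := by simp
    rw [h0]
    refine tendsto_integral_of_dominated_convergence C
      (fun i => (((hS_int i).sub (h1P_int i)).div_const (q i)).aestronglyMeasurable)
      hC_int (fun i => ?_) ?_
    · filter_upwards with ω
      rw [Real.norm_eq_abs, abs_of_nonneg (hf_nonneg i ω)]
      exact hf_le_C i ω
    · filter_upwards with ω
      have hsq : Tendsto (fun i => q i * (C ω) ^ 2) atTop (nhds 0) := by
        simpa using hq_zero.mul_const ((C ω) ^ 2)
      exact squeeze_zero (fun i => hf_nonneg i ω) (fun i => hf_le_sq i ω) hsq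
  -- rewrite the target
  have key : ∀ i, (∫ ω, (1 - P i ω) ∂μ) / (q i * ET) = 1 - (∫ ω, f i ω ∂μ) / ET := by
    intro i
    have hd_int : Integrable (fun ω => S i ω - (1 - P i ω)) μ := (hS_int i).sub (h1P_int i)
    have hintf : ∫ ω, f i ω ∂μ = (∫ ω, (S i ω - (1 - P i ω)) ∂μ) / q i := by
      rw [hf]; exact integral_div _ _
    have hdint : ∫ ω, (S i ω - (1 - P i ω)) ∂μ = q i * ET - ∫ ω, (1 - P i ω) ∂μ := by
      rw [integral_sub (hS_int i) (h1P_int i), hES i]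
    rw [hintf, hdint, div_div, sub_div, div_self (mul_ne_zero (hq_pos i).ne' hET.ne')]
    ring
  refine (tendsto_congr key).mpr ?_
  have : Tendsto (fun i => 1 - (∫ ω, f i ω ∂μ) / ET) atTop (nhds (1 - 0 / ET)) :=
    tendsto_const_nhds.sub (hf_tendsto.div_const ET)
  simpa using this
end

section
/- Let q : ℕ → ℝ>0 be nonincreasing and summable, ε ∈ (0,1), i₀ ∈ ℕ, and let p : ℕ → ℝ≥0 satisfy (1-ε) c q_i < p_i < (1+ε) c q_i for all i ≥ i₀ and some c > 0. Then for every x ≥ i₀ and every finite set C ⊆ {i₀+1, i₀+2, …} with |C| = x - i₀ obtained by replacing elements of {i₀+1,…,x} with elements of {x+1, x+2, …}, one has ∑_{i = i₀+1}^{x} p_i ≥ ((1-ε)/(1+ε)) ∑_{i ∈ C} p_i. -/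
/-- Exchange-argument inequality: swapping cached documents from the prefix
`{i₀+1,…,x}` for documents indexed above `i₀` (in particular above `x`) cannot increase
the sum of cycle-request probabilities by more than a factor `(1+ε)/(1-ε)`. -/
theorem exchange_inequality
    (q : ℕ → ℝ) (hq_mono : Antitone q) (hq_pos : ∀ i, 0 < q i) (hq_sum : Summable q)
    (ε : ℝ) (hε0 : 0 < ε) (hε1 : ε < 1)
    (i₀ : ℕ) (c : ℝ) (hc : 0 < c)
    (p : ℕ → ℝ) (hp_nonneg : ∀ i, 0 ≤ p i)
    (hp : ∀ i, i₀ ≤ i → (1 - ε) * c * q i < p i ∧ p i < (1 + ε) * c * q i)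
    (x : ℕ) (hx : i₀ ≤ x)
    (C : Finset ℕ) (hC_sub : ∀ i ∈ C, i₀ < i) (hC_card : C.card = x - i₀) :
    ((1 - ε) / (1 + ε)) * ∑ i ∈ C, p i ≤ ∑ i ∈ Finset.Icc (i₀ + 1) x, p i := by
  set n := x - i₀ with hn
  have hxn : x = i₀ + n := by omega
  have e := C.orderEmbOfFin hC_card
  -- key: the k-th smallest element of C is at least i₀+1+k
  have hkey : ∀ (k : ℕ) (hk : k < n), i₀ + 1 + k ≤ C.orderEmbOfFin hC_card ⟨k, hk⟩ := by
    intro k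
    induction k with
    | zero =>
      intro hk
      have := hC_sub _ (C.orderEmbOfFin_mem hC_card ⟨0, hk⟩)
      omega
    | succ m ih =>
      intro hk
      have hm : m < n := by omega
      have h1 := ih hm
      have h2 : C.orderEmbOfFin hC_card ⟨m, hm⟩ < C.orderEmbOfFin hC_card ⟨m + 1, hk⟩ := by
        apply (C.orderEmbOfFin hC_card).strictMono
        exact Fin.mk_lt_mk.mpr (Nat.lt_succ_self m)
      omega
  -- q-sum comparison
  have hqsum : ∑ i ∈ C, q i ≤ ∑ i ∈ Finset.Icc (i₀ + 1) x, q i := by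
    have hCmap : C = Finset.univ.map (C.orderEmbOfFin hC_card).toEmbedding := by
      apply Finset.ext
      intro a
      simp only [Finset.mem_map, Finset.mem_univ, true_and, RelEmbedding.coe_toEmbedding]
      constructor
      · intro ha
        have : a ∈ Set.range (C.orderEmbOfFin hC_card) := by
          rw [Finset.range_orderEmbOfFin]; exact ha
        obtain ⟨k, hk⟩ := this; exact ⟨k, hk⟩
      · rintro ⟨k, rfl⟩; exact C.orderEmbOfFin_mem hC_card k
    have hL : ∑ i ∈ C, q i = ∑ k : Fin n, q (C.orderEmbOfFin hC_card k) := by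
      conv_lhs => rw [hCmap]
      rw [Finset.sum_map]; rfl
    have hR : ∑ i ∈ Finset.Icc (i₀ + 1) x, q i = ∑ k : Fin n, q (i₀ + 1 + (k : ℕ)) := by
      rw [← Finset.Ico_add_one_right_eq_Icc, Finset.sum_Ico_eq_sum_range,
        Fin.sum_univ_eq_sum_range (fun k => q (i₀ + 1 + k))]
      have h : x + 1 - (i₀ + 1) = n := by omega
      rw [h]
    rw [hL, hR]
    exact Finset.sum_le_sum fun k _ => hq_mono (hkey k.1 k.2)
  have hqC_nonneg : 0 ≤ ∑ i ∈ C, q i := Finset.sum_nonneg fun i _ => (hq_pos i).le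
  have h1 : ∑ i ∈ C, p i ≤ (1 + ε) * c * ∑ i ∈ C, q i := by
    rw [Finset.mul_sum]
    exact Finset.sum_le_sum fun i hi => (hp i (hC_sub i hi).le).2.le
  have h2 : (1 - ε) * c * ∑ i ∈ Finset.Icc (i₀ + 1) x, q i ≤
      ∑ i ∈ Finset.Icc (i₀ + 1) x, p i := by
    rw [Finset.mul_sum]
    refine Finset.sum_le_sum fun i hi => ?_
    have : i₀ ≤ i := by
      have := (Finset.mem_Icc.mp hi).1; omega
    exact (hp i this).1.le
  have hε1' : (0:ℝ) < 1 + ε := by linarith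
  have hε2 : (0:ℝ) ≤ 1 - ε := by linarith
  calc ((1 - ε) / (1 + ε)) * ∑ i ∈ C, p i
      ≤ ((1 - ε) / (1 + ε)) * ((1 + ε) * c * ∑ i ∈ C, q i) := by
        apply mul_le_mul_of_nonneg_left h1 (div_nonneg hε2 hε1'.le)
    _ = (1 - ε) * c * ∑ i ∈ C, q i := by
        field_simp
    _ ≤ (1 - ε) * c * ∑ i ∈ Finset.Icc (i₀ + 1) x, q i := by
        apply mul_le_mul_of_nonneg_left hqsum (by positivity)
    _ ≤ ∑ i ∈ Finset.Icc (i₀ + 1) x, p i := h2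
end
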